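/- For every integer m ≥ 2, the sum of 1/(2 - ξ - ξ̄) over all primitive m-th roots of unity ξ equals (1/12)·∑_{r | m} μ(m/r)·r², where μ is the Möbius function and ξ̄ denotes the complex conjugate of ξ. -/

import Mathlib

open Finset

section Aux

open Polynomial

private lemma stmt2_sum_k_pow (x : ℂ) (n : ℕ) :
    (1 - x) * ∑ k ∈ range n, (k : ℂ) * x ^ k
      = (∑ k ∈ range n, x ^ k) - 1 - ((n : ℂ) - 1) * x ^ n := by
  induction n with
  | zero => simp
  | succ n ih =>
    rw [Finset.sum_range_succ, Finset.sum_range_succ]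
    push_cast
    ring_nf
    ring_nf at ih
    linear_combination ih

private lemma stmt2_sum_sq (n : ℕ) : ∑ k ∈ range n, (k : ℂ) ^ 2
    = (n : ℂ) * ((n:ℂ) - 1) * (2*(n:ℂ) - 1) / 6 := by
  induction n with
  | zero => simp
  | succ n ih => rw [Finset.sum_range_succ, ih]; push_cast; ring

private lemma stmt2_sum_id (n : ℕ) : ∑ k ∈ range n, (k : ℂ)
    = (n : ℂ) * ((n:ℂ) - 1) / 2 := by
  induction n with
  | zero => simp
  | succ n ih => rw [Finset.sum_range_succ, ih]; push_cast; ring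

private lemma stmt2_per_root {n : ℕ} (hn : 0 < n) {ξ : ℂ} (hξ : ξ ^ n = 1) (h1 : ξ ≠ 1) :
    1 / (2 - ξ - (starRingEnd ℂ) ξ)
      = -ξ * (∑ k ∈ range n, (k : ℂ) * ξ ^ k) ^ 2 / (n : ℂ) ^ 2 := by
  have hξ0 : ξ ≠ 0 := by
    intro h; rw [h] at hξ; simp [zero_pow hn.ne'] at hξ
  have hone : (1 : ℂ) - ξ ≠ 0 := by
    intro h; apply h1; linear_combination -h
  have hN : (n : ℂ) ≠ 0 := Nat.cast_ne_zero.mpr hn.ne'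
  have habs : ‖ξ‖ = 1 := Complex.norm_eq_one_of_pow_eq_one hξ hn.ne'
  have hconj : (starRingEnd ℂ) ξ = ξ⁻¹ := (Complex.inv_eq_conj habs).symm
  have hgeom : ∑ k ∈ range n, ξ ^ k = 0 := by
    rw [geom_sum_eq h1, hξ]; simp
  have hT : ∑ k ∈ range n, (k : ℂ) * ξ ^ k = -(n : ℂ) / (1 - ξ) := by
    rw [eq_div_iff hone, mul_comm]
    rw [stmt2_sum_k_pow, hgeom, hξ]
    ring
  rw [hconj, hT]
  have hden : 2 - ξ - ξ⁻¹ = -(1 - ξ) ^ 2 / ξ := by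
    field_simp; ring
  rw [hden, one_div_div]
  field_simp

private lemma stmt2_sum_pow_roots {n : ℕ} (hn : 0 < n) (t : ℕ) :
    ∑ ξ ∈ nthRootsFinset n (1:ℂ), ξ ^ t = if n ∣ t then (n : ℂ) else 0 := by
  have hζ := Complex.isPrimitiveRoot_exp n hn.ne'
  by_cases h : n ∣ t
  · rw [if_pos h]
    obtain ⟨c, rfl⟩ := h
    rw [Finset.sum_congr rfl (fun ξ hξ => ?_)]
    · rw [Finset.sum_const, hζ.card_nthRootsFinset, nsmul_eq_mul, mul_one]
    · rw [pow_mul, (Polynomial.mem_nthRootsFinset hn 1).mp hξ, one_pow]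
  · rw [if_neg h]
    set ζ := Complex.exp (2 * Real.pi * Complex.I / n)
    have hζt : ζ ^ t ≠ 1 := fun hc => h ((hζ.pow_eq_one_iff_dvd t).mp hc)
    have hζn : ζ ^ n = 1 := hζ.pow_eq_one
    have key : ∑ ξ ∈ nthRootsFinset n (1:ℂ), (ζ * ξ) ^ t
        = ∑ ξ ∈ nthRootsFinset n (1:ℂ), ξ ^ t := by
      apply Finset.sum_nbij' (fun ξ => ζ * ξ) (fun ξ => ζ⁻¹ * ξ)
      · intro ξ hξ
        rw [Polynomial.mem_nthRootsFinset hn] at hξ ⊢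
        rw [mul_pow, hζn, hξ, one_mul]
      · intro ξ hξ
        rw [Polynomial.mem_nthRootsFinset hn] at hξ ⊢
        rw [mul_pow, inv_pow, hζn, hξ, inv_one, one_mul]
      · intro ξ hξ
        have : ζ ≠ 0 := fun hc => by simp [hc, zero_pow hn.ne'] at hζn
        field_simp
      · intro ξ hξ
        have : ζ ≠ 0 := fun hc => by simp [hc, zero_pow hn.ne'] at hζn
        field_simp
      · intro ξ hξ; rfl
    simp_rw [mul_pow, ← Finset.mul_sum] at key
    have := sub_eq_zero.mpr key
    have h2 : (ζ ^ t - 1) * ∑ ξ ∈ nthRootsFinset n (1:ℂ), ξ ^ t = 0 := by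
      linear_combination this
    rcases mul_eq_zero.mp h2 with h' | h'
    · exact absurd (sub_eq_zero.mp h') hζt
    · exact h'

private lemma stmt2_hswap {n : ℕ} (hn : 0 < n) :
    ∑ ξ ∈ nthRootsFinset n (1:ℂ), ξ * (∑ k ∈ range n, (k : ℂ) * ξ ^ k) ^ 2
      = (n : ℂ) * ∑ j ∈ range n, (j:ℂ) * ((n - 1 - j : ℕ):ℂ) := by
  have e1 : ∀ ξ : ℂ, ξ * (∑ k ∈ range n, (k : ℂ) * ξ ^ k) ^ 2
      = ∑ j ∈ range n, ∑ k ∈ range n, ((j:ℂ) * (k:ℂ)) * ξ ^ (j + k + 1) := by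
    intro ξ
    rw [sq, Finset.sum_mul_sum, Finset.mul_sum]
    refine Finset.sum_congr rfl fun j _ => ?_
    rw [Finset.mul_sum]
    refine Finset.sum_congr rfl fun k _ => ?_
    rw [pow_add, pow_add, pow_one]
    ring
  simp_rw [e1]
  rw [Finset.sum_comm]
  rw [Finset.sum_congr rfl fun j _ => Finset.sum_comm]
  have e2 : ∀ j ∈ range n, ∑ k ∈ range n, ∑ ξ ∈ nthRootsFinset n (1:ℂ),
      ((j:ℂ) * (k:ℂ)) * ξ ^ (j + k + 1)
      = (j:ℂ) * ((n - 1 - j : ℕ):ℂ) * (n:ℂ) := by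
    intro j hj
    rw [Finset.mem_range] at hj
    have e3 : ∀ k ∈ range n, ∑ ξ ∈ nthRootsFinset n (1:ℂ), ((j:ℂ) * (k:ℂ)) * ξ ^ (j + k + 1)
        = if k = n - 1 - j then (j:ℂ) * (k:ℂ) * (n:ℂ) else 0 := by
      intro k hk
      rw [Finset.mem_range] at hk
      rw [← Finset.mul_sum, stmt2_sum_pow_roots hn]
      by_cases hkk : k = n - 1 - j
      · rw [if_pos hkk, if_pos (show n ∣ j + k + 1 from ⟨1, by omega⟩)]
      · rw [if_neg hkk, if_neg ?_, mul_zero]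
        rintro ⟨c, hc⟩
        rcases c with _ | _ | c
        · omega
        · omega
        · have h2n : 2 * n ≤ n * (c + 1 + 1) := by nlinarith
          omega
    rw [Finset.sum_congr rfl e3, Finset.sum_ite_eq' (range n) (n - 1 - j)
      (fun k => (j:ℂ) * (k:ℂ) * (n:ℂ)), if_pos (by rw [Finset.mem_range]; omega)]
  rw [Finset.sum_congr rfl e2, ← Finset.sum_mul]
  ring

private lemma stmt2_hSN (n : ℕ) :
    ∑ j ∈ range n, (j:ℂ) * ((n - 1 - j : ℕ):ℂ)
      = (n:ℂ) * ((n:ℂ) - 1) * ((n:ℂ) - 2) / 6 := by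
  have h : ∀ j ∈ range n, (j:ℂ) * ((n - 1 - j : ℕ):ℂ)
      = ((n:ℂ) - 1) * (j:ℂ) - (j:ℂ)^2 := by
    intro j hj
    rw [Finset.mem_range] at hj
    have h1 : n - 1 - j = n - (1 + j) := by omega
    have h2 : 1 + j ≤ n := by omega
    rw [h1, Nat.cast_sub h2]
    push_cast
    ring
  rw [Finset.sum_congr rfl h, Finset.sum_sub_distrib, ← Finset.mul_sum, stmt2_sum_id,
    stmt2_sum_sq]
  ring

private lemma stmt2_g_all {n : ℕ} (hn : 0 < n) :
    ∑ ξ ∈ nthRootsFinset n (1:ℂ), 1 / (2 - ξ - (starRingEnd ℂ) ξ)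
      = ((n:ℂ) ^ 2 - 1) / 12 := by
  have hN : (n : ℂ) ≠ 0 := Nat.cast_ne_zero.mpr hn.ne'
  set F : ℂ → ℂ := fun ξ => -ξ * (∑ k ∈ range n, (k : ℂ) * ξ ^ k) ^ 2 / (n : ℂ) ^ 2 with hF
  have h1mem : (1:ℂ) ∈ nthRootsFinset n (1:ℂ) := Polynomial.one_mem_nthRootsFinset hn
  have hzero : 1 / (2 - (1:ℂ) - (starRingEnd ℂ) 1) = 0 := by norm_num
  rw [← Finset.sum_erase (f := fun ξ : ℂ => 1 / (2 - ξ - (starRingEnd ℂ) ξ))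
    (a := (1:ℂ)) _ hzero]
  rw [Finset.sum_congr rfl fun ξ hξ =>
    stmt2_per_root hn ((Polynomial.mem_nthRootsFinset hn 1).mp (Finset.mem_of_mem_erase hξ))
      (Finset.ne_of_mem_erase hξ)]
  have hback := Finset.add_sum_erase _ F h1mem
  have hsum : ∑ ξ ∈ nthRootsFinset n (1:ℂ), F ξ
      = -((n : ℂ) * ((n:ℂ) * ((n:ℂ) - 1) * ((n:ℂ) - 2) / 6)) / (n:ℂ)^2 := by
    have : ∀ ξ ∈ nthRootsFinset n (1:ℂ),
        F ξ = -(ξ * (∑ k ∈ range n, (k : ℂ) * ξ ^ k) ^ 2) / (n : ℂ) ^ 2 := by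
      intro ξ _; rw [hF]; ring
    rw [Finset.sum_congr rfl this, ← Finset.sum_div, Finset.sum_neg_distrib,
      stmt2_hswap hn, stmt2_hSN]
  have hF1 : F 1 = -(((n:ℂ) * ((n:ℂ) - 1) / 2) ^ 2) / (n:ℂ)^2 := by
    rw [hF]
    simp only [one_pow, mul_one]
    rw [stmt2_sum_id]
    ring
  have herase : ∑ ξ ∈ (nthRootsFinset n (1:ℂ)).erase 1, F ξ
      = ∑ ξ ∈ nthRootsFinset n (1:ℂ), F ξ - F 1 := by
    rw [← hback]; ring
  rw [herase, hsum, hF1]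
  field_simp
  ring

end Aux

theorem stmt_2 (m : ℕ) (hm : 2 ≤ m) :
    ∑ ξ ∈ primitiveRoots m ℂ, 1 / (2 - ξ - (starRingEnd ℂ) ξ)
      = (1 / 12 : ℂ) *
        ((∑ r ∈ m.divisors, (ArithmeticFunction.moebius (m / r)) * (r : ℤ) ^ 2 : ℤ) : ℂ) := by
  classical
  set f : ℕ → ℂ := fun d => ∑ ξ ∈ primitiveRoots d ℂ, 1 / (2 - ξ - (starRingEnd ℂ) ξ) with hf
  set g : ℕ → ℂ := fun n => ((n:ℂ) ^ 2 - 1) / 12 with hg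
  have hdiv : ∀ n > 0, ∑ d ∈ n.divisors, f d = g n := by
    intro n hn
    rw [show g n = ((n:ℂ) ^ 2 - 1) / 12 from rfl, ← stmt2_g_all hn,
      IsPrimitiveRoot.nthRoots_one_eq_biUnion_primitiveRoots,
      Finset.sum_biUnion]
    intro i _ j _ hij
    exact IsPrimitiveRoot.disjoint hij
  have key := (ArithmeticFunction.sum_eq_iff_sum_mul_moebius_eq.mp hdiv) m (by omega)
  rw [Nat.sum_divisorsAntidiagonal'
    (f := fun d e => ((ArithmeticFunction.moebius d : ℤ) : ℂ) * g e)] at key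
  rw [show (∑ ξ ∈ primitiveRoots m ℂ, 1 / (2 - ξ - (starRingEnd ℂ) ξ)) = f m from rfl,
    ← key]
  have hmu : ∑ r ∈ m.divisors, ((ArithmeticFunction.moebius (m / r) : ℤ) : ℂ) = 0 := by
    have h1 : ∑ r ∈ m.divisors, (ArithmeticFunction.moebius (m / r) : ℤ)
        = ∑ r ∈ m.divisors, (ArithmeticFunction.moebius r : ℤ) :=
      Nat.sum_div_divisors m ArithmeticFunction.moebius
    have h2 : ∑ r ∈ m.divisors, (ArithmeticFunction.moebius r : ℤ) = 0 := by
      have h3 := congrArg (fun F : ArithmeticFunction ℤ => F m)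
        ArithmeticFunction.moebius_mul_coe_zeta
      simp only [ArithmeticFunction.coe_mul_zeta_apply] at h3
      rw [h3, ArithmeticFunction.one_apply_ne (by omega)]
    rw [← Int.cast_sum, h1, h2, Int.cast_zero]
  have expand : ∑ r ∈ m.divisors, ((ArithmeticFunction.moebius (m / r) : ℤ) : ℂ) * g r
      = (1/12 : ℂ) * (∑ r ∈ m.divisors,
          ((ArithmeticFunction.moebius (m / r) : ℤ) : ℂ) * (r:ℂ)^2)
        - (1/12 : ℂ) * ∑ r ∈ m.divisors, ((ArithmeticFunction.moebius (m / r) : ℤ) : ℂ) := by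
    rw [Finset.mul_sum, Finset.mul_sum, ← Finset.sum_sub_distrib]
    refine Finset.sum_congr rfl fun r _ => ?_
    rw [hg]
    ring
  rw [expand, hmu, mul_zero, sub_zero]
  push_cast
  ring
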